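/- Let A₁,…,A₉ be self-adjoint unitaries satisfying the magic-square commutation relations (operators in the same row/column commute), all row products equal to I, the column products A₁A₄A₇ = A₂A₅A₈ = I, and additionally A₃A₆A₉ = I. Then A₂ commutes with A₄, and A₁ commutes with A₅; consequently A₁, A₂, A₄, A₅ generate a representation of (Z/2Z)^4. -/
import Mathlib

private lemma triple8 {M : Type*} [Monoid M] {x y z : M} (h : x * y * z = 1)
    (hx : x * x = 1) (hy : y * y = 1) : z = y * x := by
  have hx' : ∀ w : M, x * (x * w) = w := fun w => by rw [← mul_assoc, hx, one_mul]
  have h' : x * (y * z) = 1 := by rw [← mul_assoc]; exact h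
  calc z = y * (y * z) := by rw [← mul_assoc, hy, one_mul]
    _ = y * (x * (x * (y * z))) := by rw [hx']
    _ = y * (x * 1) := by rw [h']
    _ = y * x := by rw [mul_one]

private lemma cancel_left8 {M : Type*} [Monoid M] {x u v : M} (hx : x * x = 1)
    (h : x * u = x * v) : u = v := by
  have := congrArg (x * ·) h
  simpa [← mul_assoc, hx] using this

private lemma cancel_right8 {M : Type*} [Monoid M] {x u v : M} (hx : x * x = 1)
    (h : u * x = v * x) : u = v := by
  have := congrArg (· * x) h
  simpa [mul_assoc, hx] using this

private lemma pow_mod_two8 {M : Type*} [Monoid M] {a : M} (h : a * a = 1) (n : ℕ) :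
    a ^ (n % 2) = a ^ n := by
  conv_rhs => rw [← Nat.div_add_mod n 2]
  rw [pow_add, pow_mul, pow_two, h, one_pow, one_mul]

private lemma rearr48 {M : Type*} [Monoid M] {x1 x2 x3 x4 y1 y2 y3 y4 : M}
    (h12 : Commute y1 x2) (h13 : Commute y1 x3) (h14 : Commute y1 x4)
    (h23 : Commute y2 x3) (h24 : Commute y2 x4) (h34 : Commute y3 x4) :
    (x1 * (x2 * (x3 * x4))) * (y1 * (y2 * (y3 * y4)))
      = (x1 * y1) * ((x2 * y2) * ((x3 * y3) * (x4 * y4))) := by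
  have c1 : Commute (x2 * (x3 * x4)) y1 := (h12.symm).mul_left ((h13.symm).mul_left h14.symm)
  have c2 : Commute (x3 * x4) y2 := (h23.symm).mul_left h24.symm
  rw [Commute.mul_mul_mul_comm c1, Commute.mul_mul_mul_comm c2,
    Commute.mul_mul_mul_comm h34.symm]

set_option maxHeartbeats 1000000 in
theorem stmt8 {H : Type*} [NormedAddCommGroup H] [InnerProductSpace ℂ H] [CompleteSpace H]
    (A : Fin 3 → Fin 3 → (H →L[ℂ] H))
    (hsa : ∀ i j, IsSelfAdjoint (A i j))
    (hsq : ∀ i j, A i j * A i j = 1)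
    (hrowcomm : ∀ r c c', Commute (A r c) (A r c'))
    (hcolcomm : ∀ c r r', Commute (A r c) (A r' c))
    (hrow : ∀ r, A r 0 * A r 1 * A r 2 = 1)
    (hcol0 : A 0 0 * A 1 0 * A 2 0 = 1)
    (hcol1 : A 0 1 * A 1 1 * A 2 1 = 1)
    (hcol2 : A 0 2 * A 1 2 * A 2 2 = 1) :
    Commute (A 0 1) (A 1 0) ∧ Commute (A 0 0) (A 1 1) ∧
    ∃ φ : Multiplicative (ZMod 2 × ZMod 2 × ZMod 2 × ZMod 2) →* (H →L[ℂ] H),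
      φ (Multiplicative.ofAdd (1, 0, 0, 0)) = A 0 0 ∧
      φ (Multiplicative.ofAdd (0, 1, 0, 0)) = A 0 1 ∧
      φ (Multiplicative.ofAdd (0, 0, 1, 0)) = A 1 0 ∧
      φ (Multiplicative.ofAdd (0, 0, 0, 1)) = A 1 1 := by
  set a := A 0 0 with ha
  set b := A 0 1 with hb
  set c := A 1 0 with hc
  set d := A 1 1 with hd
  have hab : Commute a b := hrowcomm 0 0 1
  have hac : Commute a c := hcolcomm 0 0 1
  have hbd : Commute b d := hcolcomm 1 0 1
  have hcd : Commute c d := hrowcomm 1 0 1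
  have h02 : A 0 2 = b * a := triple8 (hrow 0) (hsq 0 0) (hsq 0 1)
  have h12 : A 1 2 = d * c := triple8 (hrow 1) (hsq 1 0) (hsq 1 1)
  have h20 : A 2 0 = c * a := triple8 hcol0 (hsq 0 0) (hsq 1 0)
  have h21 : A 2 1 = d * b := triple8 hcol1 (hsq 0 1) (hsq 1 1)
  have h22r : A 2 2 = A 2 1 * A 2 0 := triple8 (hrow 2) (hsq 2 0) (hsq 2 1)
  have h22c : A 2 2 = A 1 2 * A 0 2 := triple8 hcol2 (hsq 0 2) (hsq 1 2)
  -- first commute : b and c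
  have eq1 : A 2 1 * A 2 0 = A 1 2 * A 0 2 := by rw [← h22r, h22c]
  rw [h20, h21, h12, h02] at eq1
  have e1 : d * (b * (c * a)) = d * (c * (b * a)) := by
    rw [← mul_assoc, ← mul_assoc]; exact eq1
  have e2 : (b * c) * a = (c * b) * a := by
    rw [mul_assoc, mul_assoc]; exact cancel_left8 (hsq 1 1) e1
  have hbc : Commute b c := cancel_right8 (hsq 0 0) e2
  -- second commute : a and d
  have eq2 : A 2 0 * A 2 1 = A 1 2 * A 0 2 := by
    rw [(hrowcomm 2 0 1).eq, ← h22r, h22c]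
  rw [h20, h21, h12, h02] at eq2
  have e3 : b * (c * (a * d)) = b * (c * (d * a)) := by
    calc b * (c * (a * d))
        = c * (b * (a * d)) := by rw [← mul_assoc, hbc.eq, mul_assoc]
      _ = c * (a * (b * d)) := by rw [← mul_assoc b a d, ← hab.eq, mul_assoc]
      _ = c * (a * (d * b)) := by rw [hbd.eq]
      _ = (c * a) * (d * b) := by rw [← mul_assoc]
      _ = (d * c) * (b * a) := eq2
      _ = c * (d * (b * a)) := by rw [← hcd.eq, mul_assoc]
      _ = c * ((d * b) * a) := by rw [← mul_assoc d b a]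
      _ = c * ((b * d) * a) := by rw [← hbd.eq]
      _ = c * (b * (d * a)) := by rw [mul_assoc b d a]
      _ = (c * b) * (d * a) := by rw [← mul_assoc]
      _ = b * (c * (d * a)) := by rw [← hbc.eq, mul_assoc]
  have had : Commute a d :=
    cancel_left8 (hsq 1 0) (cancel_left8 (hsq 0 1) e3)
  refine ⟨hbc, had, ?_⟩
  -- build the homomorphism
  refine ⟨{ toFun := fun g =>
              a ^ (Multiplicative.toAdd g).1.val *
                (b ^ (Multiplicative.toAdd g).2.1.val *
                  (c ^ (Multiplicative.toAdd g).2.2.1.val *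
                    d ^ (Multiplicative.toAdd g).2.2.2.val)),
            map_one' := by simp,
            map_mul' := by
              intro g h
              simp only [toAdd_mul, Prod.fst_add, Prod.snd_add]
              rw [ZMod.val_add, ZMod.val_add, ZMod.val_add, ZMod.val_add]
              rw [pow_mod_two8 (hsq 0 0), pow_mod_two8 (hsq 0 1),
                pow_mod_two8 (hsq 1 0), pow_mod_two8 (hsq 1 1),
                pow_add, pow_add, pow_add, pow_add]
              refine Eq.symm (rearr48 ?_ ?_ ?_ ?_ ?_ ?_)
              · exact hab.pow_pow _ _
              · exact hac.pow_pow _ _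
              · exact had.pow_pow _ _
              · exact hbc.pow_pow _ _
              · exact hbd.pow_pow _ _
              · exact hcd.pow_pow _ _ },
    ?_, ?_, ?_, ?_⟩ <;>
    simp [ZMod.val_one, ZMod.val_zero]
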